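/- Let G be a totally disconnected group and π a representation of G on a separated bornological vector space V. The map ι_V: Smooth(V) → V, ι_V(f) = f(e), induces a natural isomorphism Hom_G(W, V) ≅ Hom_G(W, Smooth(V)) for all separated smooth G-modules W; i.e., the smoothing functor is right adjoint to the forgetful functor from smooth representations to arbitrary representations. -/

import Mathlib

/-!
STATEMENT 19: For a totally disconnected group `G` and a representation of `G` on a
separated bornological vector space `V`, the map `ι_V : Smooth(V) → V`, `f ↦ f(e)`,
induces a natural bijection `Hom_G(W, V) ≅ Hom_G(W, Smooth(V))` for every separated
smooth `G`-module `W`; i.e. smoothing is right adjoint to the forgetful functor.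
-/

open Bornology Set
open scoped Pointwise

/-- A bornological vector space is separated if the only bounded linear subspace is `0`. -/
def SeparatedBorn (V : Type) [AddCommGroup V] [Module ℝ V] [Bornology V] : Prop :=
  ∀ W : Submodule ℝ V, IsBounded (W : Set V) → W = ⊥

variable (G : Type) [Group G] [TopologicalSpace G] [IsTopologicalGroup G]
  [TotallyDisconnectedSpace G] [LocallyCompactSpace G]
  [SecondCountableTopology G]

section Smoothing

variable (V : Type) [AddCommGroup V] [Module ℝ V] [Bornology V]
  [DistribMulAction G V] [SMulCommClass G ℝ V]

/-- A representation of `G` on a bornological vector space is smooth iff the pointwise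
stabilizer of every small subset is open. -/
def SmoothRep : Prop :=
  ∀ S : Set V, IsBounded S → IsOpen {g : G | ∀ v ∈ S, g • v = v}

/-- The smoothing `Smooth(V) = {f ∈ E(G,V) | f(t) = t · f(e)}`: smooth (locally
constant) functions `G → V` determined by their value at the identity. -/
def SmoothSub : Submodule ℝ (G → V) where
  carrier := {f | IsLocallyConstant f ∧ ∀ t : G, f t = t • f 1}
  add_mem' := by
    intro f g hf hg
    exact ⟨hf.1.comp₂ hg.1 (· + ·), fun t => by
      simp only [Pi.add_apply, hf.2 t, hg.2 t, smul_add]⟩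
  zero_mem' := ⟨IsLocallyConstant.const 0, fun t => by simp⟩
  smul_mem' := by
    intro r f hf
    exact ⟨hf.1.comp (r • ·), fun t => by
      simp only [Pi.smul_apply, hf.2 t, (smul_comm t r (f 1)).symm]⟩

/-- The bornology of `Smooth(V)` (the subspace bornology from `E(G,V)`): a set of
functions is small iff it is uniformly small on compact subsets of `G` and
equi-locally-constant. -/
def SmallSmooth (S : Set (SmoothSub G V)) : Prop :=
  (∀ K : Set G, IsCompact K → IsBounded {v | ∃ f ∈ S, ∃ g ∈ K, (f : G → V) g = v}) ∧
  (∀ t : G, ∃ U : Set G, IsOpen U ∧ t ∈ U ∧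
    ∀ f ∈ S, ∀ u ∈ U, (f : G → V) u = (f : G → V) t)

end Smoothing


section Adjoint

variable {V : Type} [AddCommGroup V] [Module ℝ V] [Bornology V]
  [DistribMulAction G V] [SMulCommClass G ℝ V]
  {W : Type} [AddCommGroup W] [Module ℝ W] [Bornology W]
  [DistribMulAction G W] [SMulCommClass G ℝ W]

theorem orbitFun_mem (hWsmooth : SmoothRep G W) (ψ : W →ₗ[ℝ] V)
    (hψ : ∀ (g : G) (w : W), ψ (g • w) = g • ψ w) (w : W) :
    (fun t : G => t • ψ w) ∈ SmoothSub G V := by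
  constructor
  · rw [IsLocallyConstant.iff_exists_open]
    intro t
    refine ⟨t • {g : G | ∀ v ∈ ({w} : Set W), g • v = v}, ?_, ?_, ?_⟩
    · exact (hWsmooth {w} (Set.finite_singleton w).isBounded).smul t
    · exact ⟨1, fun v hv => by simp, by simp⟩
    · rintro u hu
      obtain ⟨g, hg, rfl⟩ := hu
      have hgw : g • w = w := hg w rfl
      calc (t • g) • ψ w = ψ ((t * g) • w) := (hψ _ _).symm
        _ = ψ (t • (g • w)) := by rw [mul_smul]
        _ = ψ (t • w) := by rw [hgw]
        _ = t • ψ w := hψ _ _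
  · intro t
    simp

/-- The smoothing map `W →ₗ Smooth(V)` induced by an equivariant `ψ : W →ₗ V`. -/
def toSmooth (hWsmooth : SmoothRep G W) (ψ : W →ₗ[ℝ] V)
    (hψ : ∀ (g : G) (w : W), ψ (g • w) = g • ψ w) : W →ₗ[ℝ] SmoothSub G V where
  toFun w := ⟨fun t => t • ψ w, orbitFun_mem G hWsmooth ψ hψ w⟩
  map_add' a b := Subtype.ext (funext fun t => by simp [smul_add])
  map_smul' r a := Subtype.ext (funext fun t => by
    simp [smul_comm t r])

theorem bounded_orbit (hWsmooth : SmoothRep G W)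
    (hWb : ∀ (g : G) (S : Set W), IsBounded S → IsBounded ((g • ·) '' S))
    (S : Set W) (hS : IsBounded S) (K : Set G) (hK : IsCompact K) :
    ∃ T : Set W, IsBounded T ∧ ∀ t ∈ K, ∀ w ∈ S, t • w ∈ T := by
  set U := {g : G | ∀ v ∈ S, g • v = v} with hUdef
  have hU : IsOpen U := hWsmooth S hS
  have hcover : K ⊆ ⋃ t ∈ K, t • U := fun t ht =>
    Set.mem_biUnion ht ⟨1, fun v _ => one_smul G v, by simp⟩
  obtain ⟨F, hFK, hFfin, hFcov⟩ :=
    hK.elim_finite_subcover_image (fun t _ => hU.smul t) hcover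
  refine ⟨⋃ t ∈ F, (t • ·) '' S, ?_, ?_⟩
  · exact (Bornology.isBounded_biUnion hFfin).mpr fun t _ => hWb t S hS
  · intro t ht w hw
    obtain ⟨t₀, ht₀, htU⟩ := Set.mem_iUnion₂.mp (hFcov ht)
    obtain ⟨g, hg, rfl⟩ := htU
    have : (t₀ • g) • w = t₀ • w := by
      rw [smul_eq_mul, mul_smul, hg w hw]
    exact Set.mem_biUnion ht₀ ⟨w, hw, this.symm⟩

end Adjoint

theorem stmt19
    (V : Type) [AddCommGroup V] [Module ℝ V] [Bornology V]
    [DistribMulAction G V] [SMulCommClass G ℝ V]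
    -- `V` carries a representation of `G` by bounded linear automorphisms
    (hVb : ∀ (g : G) (S : Set V), IsBounded S → IsBounded ((g • ·) '' S))
    (hVsep : SeparatedBorn V)
    (W : Type) [AddCommGroup W] [Module ℝ W] [Bornology W]
    [DistribMulAction G W] [SMulCommClass G ℝ W]
    (hWb : ∀ (g : G) (S : Set W), IsBounded S → IsBounded ((g • ·) '' S))
    (hWsep : SeparatedBorn W)
    -- `W` is a (separated) smooth `G`-module
    (hWsmooth : SmoothRep G W) :
    -- `Hom_G(W, Smooth(V)) ≅ Hom_G(W, V)` via composition with `ι_V : f ↦ f(e)`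
    ∃ e :
      {φ : W →ₗ[ℝ] SmoothSub G V //
        (∀ (g : G) (w : W) (t : G), ((φ (g • w) : G → V)) t = (φ w : G → V) (t * g)) ∧
        (∀ S : Set W, IsBounded S → SmallSmooth G V (φ '' S))} ≃
      {ψ : W →ₗ[ℝ] V //
        (∀ (g : G) (w : W), ψ (g • w) = g • ψ w) ∧
        (∀ S : Set W, IsBounded S → IsBounded (ψ '' S))},
      ∀ φ w, ((e φ : {ψ : W →ₗ[ℝ] V // _}) : W →ₗ[ℝ] V) w = ((φ : W →ₗ[ℝ] SmoothSub G V) w : G → V) 1 := by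
  classical
  refine ⟨⟨fun φ => ⟨((LinearMap.proj (1 : G)).comp (SmoothSub G V).subtype).comp φ.1,
      ?_, ?_⟩,
    fun ψ => ⟨toSmooth G hWsmooth ψ.1 ψ.2.1, ?_, ?_⟩, ?_, ?_⟩, fun φ w => rfl⟩
  · -- equivariance of `w ↦ (φ w) 1`
    intro g w
    have h1 := φ.2.1 g w 1
    have h2 := (φ.1 w).2.2 g
    simp only [LinearMap.comp_apply, LinearMap.proj_apply, Submodule.subtype_apply]
    rw [h1, one_mul, h2]
  · -- boundedness
    intro S hS
    have h := (φ.2.2 S hS).1 {1} isCompact_singleton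
    refine h.subset ?_
    rintro v ⟨w, hw, rfl⟩
    exact ⟨φ.1 w, Set.mem_image_of_mem _ hw, 1, rfl, rfl⟩
  · -- equivariance of `toSmooth`
    intro g w t
    show t • ψ.1 (g • w) = (t * g) • ψ.1 w
    rw [ψ.2.1, mul_smul]
  · -- SmallSmooth
    intro S hS
    constructor
    · intro K hK
      obtain ⟨T, hTb, hT⟩ := bounded_orbit G hWsmooth hWb S hS K hK
      refine ((ψ.2.2 T hTb)).subset ?_
      rintro v ⟨f, ⟨w, hw, rfl⟩, g, hg, rfl⟩
      exact ⟨g • w, hT g hg w hw, ψ.2.1 g w⟩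
    · intro t
      refine ⟨t • {g : G | ∀ v ∈ S, g • v = v}, (hWsmooth S hS).smul t,
        ⟨1, fun v _ => one_smul G v, by simp⟩, ?_⟩
      rintro f ⟨w, hw, rfl⟩ u ⟨g, hg, rfl⟩
      show (t • g) • ψ.1 w = t • ψ.1 w
      rw [smul_eq_mul, ← ψ.2.1, mul_smul, hg w hw, ψ.2.1]
  · -- left inverse
    intro φ
    refine Subtype.ext (LinearMap.ext fun w => Subtype.ext (funext fun t => ?_))
    exact ((φ.1 w).2.2 t).symm
  · -- right inverse
    intro ψ
    exact Subtype.ext (LinearMap.ext fun w => one_smul G (ψ.1 w))
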